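/- For positive reals x, s with x < s, letting Ã be as above and v = (−2/(x√6), 1/(s√6), 1/(s√6)), one has Ã⁻¹v = (1/(√6(s−x)(4s−x)))·(sx − 2s², −s², −s²)ᵗ, and consequently t_A(x,s,s) := (2/9)⟨v, Ã⁻¹v⟩⁻¹ = x(4s − x)/(3s). -/

import Mathlib

set_option maxHeartbeats 1000000


/-- For 0 < x < s, with Ã = Ã(x,s,s) and v = (−2/(x√6), 1/(s√6), 1/(s√6)), one has
Ã⁻¹v = (1/(√6(s−x)(4s−x)))·(sx − 2s², −s², −s²)ᵗ and hence
t_A(x,s,s) = (2/9)⟨v, Ã⁻¹v⟩⁻¹ = x(4s − x)/(3s). -/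
theorem stmt7 (x s : ℝ) (hx : 0 < x) (hs : 0 < s) (hxs : x < s) :
    (!![4 / x, (x - 3 * s) / s ^ 2, (x - 3 * s) / s ^ 2;
        (x - 3 * s) / s ^ 2, 4 / s, -2 / s;
        (x - 3 * s) / s ^ 2, -2 / s, 4 / s] : Matrix (Fin 3) (Fin 3) ℝ)⁻¹.mulVec
        ![-2 / (x * Real.sqrt 6), 1 / (s * Real.sqrt 6), 1 / (s * Real.sqrt 6)]
      = (1 / (Real.sqrt 6 * (s - x) * (4 * s - x))) •
          ![s * x - 2 * s ^ 2, -s ^ 2, -s ^ 2] ∧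
    (2 / 9) * (dotProduct
        ![-2 / (x * Real.sqrt 6), 1 / (s * Real.sqrt 6), 1 / (s * Real.sqrt 6)]
        ((!![4 / x, (x - 3 * s) / s ^ 2, (x - 3 * s) / s ^ 2;
             (x - 3 * s) / s ^ 2, 4 / s, -2 / s;
             (x - 3 * s) / s ^ 2, -2 / s, 4 / s] : Matrix (Fin 3) (Fin 3) ℝ)⁻¹.mulVec
          ![-2 / (x * Real.sqrt 6), 1 / (s * Real.sqrt 6), 1 / (s * Real.sqrt 6)]))⁻¹
      = x * (4 * s - x) / (3 * s) := by
  have hx0 : x ≠ 0 := ne_of_gt hx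
  have hs0 : s ≠ 0 := ne_of_gt hs
  have hsx : s - x ≠ 0 := sub_ne_zero.mpr (ne_of_gt hxs)
  have h4sx : 4 * s - x ≠ 0 := by nlinarith
  have hr : Real.sqrt 6 ^ 2 = 6 := Real.sq_sqrt (by norm_num)
  have hr0 : Real.sqrt 6 ≠ 0 := by positivity
  set r := Real.sqrt 6 with hrdef
  set A : Matrix (Fin 3) (Fin 3) ℝ :=
    !![4 / x, (x - 3 * s) / s ^ 2, (x - 3 * s) / s ^ 2;
       (x - 3 * s) / s ^ 2, 4 / s, -2 / s;
       (x - 3 * s) / s ^ 2, -2 / s, 4 / s] with hA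
  set v : Fin 3 → ℝ := ![-2 / (x * r), 1 / (s * r), 1 / (s * r)] with hv
  set w : Fin 3 → ℝ :=
    (1 / (r * (s - x) * (4 * s - x))) • ![s * x - 2 * s ^ 2, -s ^ 2, -s ^ 2] with hw
  set v0 : Fin 3 → ℝ := ![-2 / x, 1 / s, 1 / s] with hv0
  set w0 : Fin 3 → ℝ :=
    (1 / ((s - x) * (4 * s - x))) • ![s * x - 2 * s ^ 2, -s ^ 2, -s ^ 2] with hw0
  have hv' : v = (1 / r) • v0 := by
    funext i
    fin_cases i <;>
      simp [hv, hv0, Matrix.cons_val_two, Matrix.vecHead, Matrix.vecTail] <;>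
      field_simp <;> ring
  have hw' : w = (1 / r) • w0 := by
    rw [hw, hw0, smul_smul]
    congr 1
    field_simp
  have hdet : A.det = 12 * (s - x) ^ 2 * (4 * s - x) / (x * s ^ 5) := by
    rw [hA, Matrix.det_fin_three]
    simp [Matrix.cons_val_two, Matrix.vecHead, Matrix.vecTail]
    field_simp
    ring
  have hdu : IsUnit A.det := by
    rw [hdet, isUnit_iff_ne_zero]
    positivity
  have h0 : A.mulVec w0 = v0 := by
    have h4sx' : -x + s * 4 ≠ 0 := by intro h; apply h4sx; linarith
    funext i
    fin_cases i <;>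
      simp [hA, hw0, hv0, Matrix.mulVec, dotProduct, Fin.sum_univ_three,
        Matrix.cons_val_two, Matrix.vecHead, Matrix.vecTail] <;>
      field_simp <;> ring_nf <;> field_simp <;> ring
  have h1 : A.mulVec w = v := by
    rw [hv', hw', Matrix.mulVec_smul, h0]
  have key : A⁻¹.mulVec v = w := by
    rw [← h1, Matrix.mulVec_mulVec, Matrix.nonsing_inv_mul A hdu, Matrix.one_mulVec]
  refine ⟨key, ?_⟩
  rw [key]
  have hdot0 : dotProduct v0 w0 = 4 * s / (x * (4 * s - x)) := by
    rw [hw0, dotProduct_smul]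
    simp [hv0, dotProduct, Fin.sum_univ_three,
      Matrix.cons_val_two, Matrix.vecHead, Matrix.vecTail, smul_eq_mul]
    field_simp
    ring
  have hdot : dotProduct v w = 2 * s / (3 * x * (4 * s - x)) := by
    rw [hv', hw', smul_dotProduct, dotProduct_smul, hdot0, smul_eq_mul,
      smul_eq_mul]
    have h6 : r * r = 6 := by nlinarith [hr]
    field_simp
    linear_combination -2 * hr
  rw [hdot]
  field_simp
  ring
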